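/- Let (X,d) be a complete metric space on which a compact Hausdorff topological group G acts continuously. If the set X^G of G-fixed points is nonempty and there exists an equivariant contractive quasi-mean p : X × X → X, then X is G-contractible. -/

import Mathlib

open Filter Topology Set

section auxdy

variable {X : Type*} [MetricSpace X]

/-- Dyadic chain: `dyChain p x₀ x n k` is the point at dyadic time `k / 2^n`
on the "path" from `x` (at time 0) to `x₀` (at time 1) built from the quasi-mean `p`. -/
def dyChain (p : X × X → X) (x₀ x : X) : ℕ → ℕ → X
  | 0, k => if k = 0 then x else x₀
  | n + 1, k =>
      if k % 2 = 0 then dyChain p x₀ x n (k / 2)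
      else p (dyChain p x₀ x n (k / 2), dyChain p x₀ x n (k / 2 + 1))

lemma dyChain_even (p : X × X → X) (x₀ x : X) (n j : ℕ) :
    dyChain p x₀ x (n + 1) (2 * j) = dyChain p x₀ x n j := by
  have h1 : (2 * j) % 2 = 0 := by omega
  have h2 : (2 * j) / 2 = j := by omega
  simp [dyChain, h1, h2]

lemma dyChain_odd (p : X × X → X) (x₀ x : X) (n j : ℕ) :
    dyChain p x₀ x (n + 1) (2 * j + 1)
      = p (dyChain p x₀ x n j, dyChain p x₀ x n (j + 1)) := by
  have h1 : (2 * j + 1) % 2 = 1 := by omega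
  have h2 : (2 * j + 1) / 2 = j := by omega
  simp [dyChain, h1, h2]

lemma dyChain_zero (p : X × X → X) (x₀ x : X) : ∀ n, dyChain p x₀ x n 0 = x := by
  intro n
  induction n with
  | zero => simp [dyChain]
  | succ n ih => simpa [dyChain] using ih

lemma dyChain_high (p : X × X → X) (x₀ x : X) (hpx : p (x₀, x₀) = x₀) :
    ∀ n k, 2 ^ n ≤ k → dyChain p x₀ x n k = x₀ := by
  intro n
  induction n with
  | zero =>
      intro k hk
      have : k ≠ 0 := by simpa using Nat.one_le_iff_ne_zero.mp hk
      simp [dyChain, this]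
  | succ n ih =>
      intro k hk
      have h2 : 2 ^ n ≤ k / 2 := by
        rw [pow_succ] at hk; omega
      have h3 : 2 ^ n ≤ k / 2 + 1 := le_trans h2 (Nat.le_succ _)
      by_cases h : k % 2 = 0
      · simp [dyChain, h, ih _ h2]
      · simp [dyChain, h, ih _ h2, ih _ h3, hpx]

lemma dyChain_cont (p : X × X → X) (hp : Continuous p) (x₀ : X) :
    ∀ n k, Continuous fun x : X => dyChain p x₀ x n k := by
  intro n
  induction n with
  | zero =>
      intro k
      by_cases h : k = 0 <;> simp [dyChain, h] <;> fun_prop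
  | succ n ih =>
      intro k
      by_cases h : k % 2 = 0
      · simpa [dyChain, h] using ih (k / 2)
      · have : (fun x : X => dyChain p x₀ x (n + 1) k)
            = fun x => p (dyChain p x₀ x n (k / 2), dyChain p x₀ x n (k / 2 + 1)) := by
          funext x; simp [dyChain, h]
        rw [this]
        exact hp.comp ((ih (k / 2)).prodMk (ih (k / 2 + 1)))

lemma dyChain_adj (p : X × X → X) (x₀ x : X) {lam : ℝ} (hlam0 : 0 ≤ lam)
    (hc : ∀ a b : X, max (dist a (p (a, b))) (dist b (p (a, b))) ≤ lam * dist a b) :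
    ∀ n k, dist (dyChain p x₀ x n k) (dyChain p x₀ x n (k + 1)) ≤ lam ^ n * dist x x₀ := by
  intro n
  induction n with
  | zero =>
      intro k
      rcases Nat.eq_zero_or_pos k with h | h
      · subst h; simp [dyChain]
      · have hk : k ≠ 0 := by omega
        simp only [dyChain, if_neg hk, if_neg (Nat.succ_ne_zero k)]
        simp [dist_nonneg]
  | succ n ih =>
      intro k
      rcases Nat.even_or_odd k with ⟨j, hj⟩ | ⟨j, hj⟩
      · have hk : k = 2 * j := by omega
        subst hk
        rw [dyChain_even, dyChain_odd]
        calc dist (dyChain p x₀ x n j)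
              (p (dyChain p x₀ x n j, dyChain p x₀ x n (j + 1)))
            ≤ lam * dist (dyChain p x₀ x n j) (dyChain p x₀ x n (j + 1)) :=
              le_trans (le_max_left _ _) (hc _ _)
          _ ≤ lam * (lam ^ n * dist x x₀) :=
              mul_le_mul_of_nonneg_left (ih j) hlam0
          _ = lam ^ (n + 1) * dist x x₀ := by ring
      · have hk : k = 2 * j + 1 := by omega
        subst hk
        have h2 : 2 * j + 1 + 1 = 2 * (j + 1) := by ring
        rw [dyChain_odd, h2, dyChain_even, dist_comm]
        calc dist (dyChain p x₀ x n (j + 1))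
              (p (dyChain p x₀ x n j, dyChain p x₀ x n (j + 1)))
            ≤ lam * dist (dyChain p x₀ x n j) (dyChain p x₀ x n (j + 1)) :=
              le_trans (le_max_right _ _) (hc _ _)
          _ ≤ lam * (lam ^ n * dist x x₀) :=
              mul_le_mul_of_nonneg_left (ih j) hlam0
          _ = lam ^ (n + 1) * dist x x₀ := by ring

lemma dyChain_near (p : X × X → X) (x₀ x : X) {lam : ℝ} (hlam0 : 0 ≤ lam)
    (hc : ∀ a b : X, max (dist a (p (a, b))) (dist b (p (a, b))) ≤ lam * dist a b)
    (n k m : ℕ) (h1 : k ≤ m + 1) (h2 : m ≤ k + 1) :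
    dist (dyChain p x₀ x n k) (dyChain p x₀ x n m) ≤ lam ^ n * dist x x₀ := by
  have hnn : 0 ≤ lam ^ n * dist x x₀ := mul_nonneg (pow_nonneg hlam0 n) dist_nonneg
  rcases show m = k ∨ m = k + 1 ∨ k = m + 1 by omega with h | h | h
  · subst h; simpa using hnn
  · subst h; exact dyChain_adj p x₀ x hlam0 hc n k
  · subst h; rw [dist_comm]; exact dyChain_adj p x₀ x hlam0 hc n m

lemma floor_double (a : ℝ) (ha : 0 ≤ a) :
    ⌊2 * a⌋₊ = 2 * ⌊a⌋₊ ∨ ⌊2 * a⌋₊ = 2 * ⌊a⌋₊ + 1 := by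
  have h1 : 2 * ⌊a⌋₊ ≤ ⌊2 * a⌋₊ := by
    apply Nat.le_floor
    push_cast
    nlinarith [Nat.floor_le ha]
  have h2 : ⌊2 * a⌋₊ < 2 * ⌊a⌋₊ + 2 := by
    rw [Nat.floor_lt (by linarith)]
    push_cast
    nlinarith [Nat.lt_floor_add_one a]
  omega

lemma floor_near_aux {a b c : ℝ} (ha : 0 ≤ a) (h : a ≤ b) (hc : 0 ≤ c)
    (hd : (b - a) * c < 1) : ⌊b * c⌋₊ ≤ ⌊a * c⌋₊ + 1 := by
  have hb : 0 ≤ b * c := mul_nonneg (le_trans ha h) hc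
  have h2 : ⌊b * c⌋₊ < ⌊a * c⌋₊ + 2 := by
    rw [Nat.floor_lt hb]
    push_cast
    nlinarith [Nat.lt_floor_add_one (a * c)]
  omega

end auxdy

set_option maxHeartbeats 1600000 in
/-- Let `(X,d)` be a complete metric space on which a compact Hausdorff
topological group `G` acts continuously. If `X^G ≠ ∅` and there is an equivariant
contractive quasi-mean `p : X × X → X`, then `X` is `G`-contractible. -/
theorem G_contractible_of_equivariant_contractive_quasi_mean
    {G : Type*} [Group G] [TopologicalSpace G] [IsTopologicalGroup G]
    [CompactSpace G] [T2Space G]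
    {X : Type*} [MetricSpace X] [CompleteSpace X] [MulAction G X] [ContinuousSMul G X]
    (hfix : {x : X | ∀ g : G, g • x = x}.Nonempty)
    (p : X × X → X) (hp : Continuous p)
    (hcontr : ∃ lam ∈ Set.Ioo (0 : ℝ) 1,
      ∀ x y : X, max (dist x (p (x, y))) (dist y (p (x, y))) ≤ lam * dist x y)
    (heq : ∀ (g : G) (x y : X), p (g • x, g • y) = g • p (x, y)) :
    ∃ Ψ : X × unitInterval → X, Continuous Ψ ∧
      (∀ x : X, Ψ (x, 0) = x) ∧
      (∃ c : X, ∀ x : X, Ψ (x, 1) = c) ∧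
      (∀ (g : G) (x : X) (t : unitInterval), Ψ (g • x, t) = g • Ψ (x, t)) := by
  obtain ⟨x₀, hx₀⟩ := hfix
  obtain ⟨lam, hlam, hc⟩ := hcontr
  have hlam0 : (0 : ℝ) ≤ lam := hlam.1.le
  have hlam1 : lam < 1 := hlam.2
  have hpx : p (x₀, x₀) = x₀ := by
    have h := hc x₀ x₀
    rw [dist_self, mul_zero, max_self] at h
    exact (dist_le_zero.mp h).symm
  -- the approximating sequence
  set approx : X × unitInterval → ℕ → X :=
    fun z n => dyChain p x₀ z.1 n ⌊(z.2 : ℝ) * 2 ^ n⌋₊ with happrox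
  have hstep : ∀ z : X × unitInterval, ∀ n,
      dist (approx z n) (approx z (n + 1)) ≤ (lam * dist z.1 x₀) * lam ^ n := by
    rintro ⟨x, t⟩ n
    have ht0 : (0 : ℝ) ≤ (t : ℝ) := t.2.1
    have hnn : 0 ≤ (t : ℝ) * 2 ^ n := by positivity
    have hrw : (t : ℝ) * 2 ^ (n + 1) = 2 * ((t : ℝ) * 2 ^ n) := by ring
    rcases floor_double ((t : ℝ) * 2 ^ n) hnn with h | h
    · have : approx (x, t) (n + 1) = approx (x, t) n := by
        simp only [happrox, hrw, h]
        exact dyChain_even p x₀ x n _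
      rw [this, dist_self]
      positivity
    · have e1 : approx (x, t) (n + 1)
          = p (dyChain p x₀ x n ⌊(t : ℝ) * 2 ^ n⌋₊,
               dyChain p x₀ x n (⌊(t : ℝ) * 2 ^ n⌋₊ + 1)) := by
        simp only [happrox, hrw, h]
        exact dyChain_odd p x₀ x n _
      have e0 : approx (x, t) n = dyChain p x₀ x n ⌊(t : ℝ) * 2 ^ n⌋₊ := rfl
      rw [e0, e1]
      calc dist (dyChain p x₀ x n ⌊(t : ℝ) * 2 ^ n⌋₊)
            (p (dyChain p x₀ x n ⌊(t : ℝ) * 2 ^ n⌋₊,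
                dyChain p x₀ x n (⌊(t : ℝ) * 2 ^ n⌋₊ + 1)))
          ≤ lam * dist (dyChain p x₀ x n ⌊(t : ℝ) * 2 ^ n⌋₊)
              (dyChain p x₀ x n (⌊(t : ℝ) * 2 ^ n⌋₊ + 1)) :=
            le_trans (le_max_left _ _) (hc _ _)
        _ ≤ lam * (lam ^ n * dist x x₀) :=
            mul_le_mul_of_nonneg_left (dyChain_adj p x₀ x hlam0 hc n _) hlam0
        _ = (lam * dist x x₀) * lam ^ n := by ring
  have hlimEx : ∀ z : X × unitInterval, ∃ L, Tendsto (approx z) atTop (𝓝 L) :=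
    fun z => cauchySeq_tendsto_of_complete
      (cauchySeq_of_le_geometric lam (lam * dist z.1 x₀) hlam1 (hstep z))
  set Ψ : X × unitInterval → X := fun z => (hlimEx z).choose with hΨdef
  have hΨ : ∀ z, Tendsto (approx z) atTop (𝓝 (Ψ z)) := fun z => (hlimEx z).choose_spec
  have htail : ∀ z : X × unitInterval, ∀ n,
      dist (approx z n) (Ψ z) ≤ (lam * dist z.1 x₀) * lam ^ n / (1 - lam) :=
    fun z n => dist_le_of_le_geometric_of_tendsto lam _ hlam1 (hstep z) (hΨ z) n
  refine ⟨Ψ, ?_, ?_, ⟨x₀, ?_⟩, ?_⟩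
  · -- continuity
    rw [Metric.continuous_iff]
    rintro ⟨y, t₀⟩ ε hε
    have hD0 : (0 : ℝ) ≤ dist y x₀ := dist_nonneg
    have hpos : (0 : ℝ) < 1 - lam := by linarith
    set L : ℝ := (1 - lam)⁻¹ with hL
    have hLpos : 0 < L := by positivity
    set C : ℝ := (dist y x₀ + 1) * (2 * L + 2) with hCdef
    have hCpos : 0 < C := by
      apply mul_pos <;> linarith
    obtain ⟨n, hn⟩ : ∃ n, lam ^ n * C < ε / 2 := by
      have h := tendsto_pow_atTop_nhds_zero_of_lt_one hlam0 hlam1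
      have h2 : Tendsto (fun n : ℕ => lam ^ n * C) atTop (𝓝 0) := by
        simpa using h.mul_const C
      exact (h2.eventually (gt_mem_nhds (by positivity : (0 : ℝ) < ε / 2))).exists
    set K := ⌊(t₀ : ℝ) * 2 ^ n⌋₊ with hK
    obtain ⟨δ1, hδ1pos, hδ1⟩ : ∃ δ1 > 0, ∀ x : X, dist x y < δ1 →
        dist (dyChain p x₀ x n K) (dyChain p x₀ y n K) < ε / 2 :=
      Metric.continuous_iff.mp (dyChain_cont p hp x₀ n K) y (ε / 2) (by positivity)
    refine ⟨min δ1 (min 1 ((2 : ℝ)⁻¹ ^ n)), by positivity, ?_⟩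
    rintro ⟨x, s⟩ hdist
    rw [Prod.dist_eq] at hdist
    have hxy1 : dist x y < δ1 := lt_of_le_of_lt (le_max_left _ _)
      (lt_of_lt_of_le hdist (min_le_left _ _))
    have hxy2 : dist x y < 1 := lt_of_le_of_lt (le_max_left _ _)
      (lt_of_lt_of_le hdist ((min_le_right _ _).trans (min_le_left _ _)))
    have hst : dist s t₀ < (2 : ℝ)⁻¹ ^ n := lt_of_le_of_lt (le_max_right _ _)
      (lt_of_lt_of_le hdist ((min_le_right _ _).trans (min_le_right _ _)))
    have hstR : |(s : ℝ) - (t₀ : ℝ)| < (2 : ℝ)⁻¹ ^ n := by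
      rwa [Subtype.dist_eq, Real.dist_eq] at hst
    have hDx : dist x x₀ ≤ dist y x₀ + 1 := by
      have := dist_triangle x y x₀
      linarith
    -- the floors are adjacent
    set ks := ⌊(s : ℝ) * 2 ^ n⌋₊ with hks
    have hprod : ((2 : ℝ)⁻¹) ^ n * 2 ^ n = 1 := by
      rw [← mul_pow]; norm_num
    have hnear : ks ≤ K + 1 ∧ K ≤ ks + 1 := by
      rcases le_total ((s : ℝ)) ((t₀ : ℝ)) with h | h
      · constructor
        · have : ks ≤ K := Nat.floor_le_floor
            (mul_le_mul_of_nonneg_right h (by positivity))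
          omega
        · apply floor_near_aux s.2.1 h (by positivity)
          have : (t₀ : ℝ) - (s : ℝ) < (2 : ℝ)⁻¹ ^ n := by
            rw [abs_sub_comm] at hstR
            exact lt_of_le_of_lt (le_abs_self _) hstR
          nlinarith [pow_pos (by norm_num : (0:ℝ) < 2) n]
      · constructor
        · apply floor_near_aux t₀.2.1 h (by positivity)
          have : (s : ℝ) - (t₀ : ℝ) < (2 : ℝ)⁻¹ ^ n :=
            lt_of_le_of_lt (le_abs_self _) hstR
          nlinarith [pow_pos (by norm_num : (0:ℝ) < 2) n]
        · have : K ≤ ks := Nat.floor_le_floor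
            (mul_le_mul_of_nonneg_right h (by positivity))
          omega
    have T1 : dist (Ψ (x, s)) (approx (x, s) n)
        ≤ (lam * dist x x₀) * lam ^ n / (1 - lam) := by
      rw [dist_comm]; exact htail (x, s) n
    have T2 : dist (approx (x, s) n) (approx (x, t₀) n) ≤ lam ^ n * dist x x₀ :=
      dyChain_near p x₀ x hlam0 hc n ks K hnear.1 hnear.2
    have T3 : dist (approx (x, t₀) n) (approx (y, t₀) n) < ε / 2 := hδ1 x hxy1
    have T4 : dist (approx (y, t₀) n) (Ψ (y, t₀))
        ≤ (lam * dist y x₀) * lam ^ n / (1 - lam) := htail (y, t₀) n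
    have htri : dist (Ψ (x, s)) (Ψ (y, t₀))
        ≤ dist (Ψ (x, s)) (approx (x, s) n) + dist (approx (x, s) n) (approx (x, t₀) n)
          + dist (approx (x, t₀) n) (approx (y, t₀) n)
          + dist (approx (y, t₀) n) (Ψ (y, t₀)) := by
      have h1 := dist_triangle (Ψ (x, s)) (approx (x, s) n) (Ψ (y, t₀))
      have h2 := dist_triangle (approx (x, s) n) (approx (x, t₀) n) (Ψ (y, t₀))
      have h3 := dist_triangle (approx (x, t₀) n) (approx (y, t₀) n) (Ψ (y, t₀))
      linarith
    have hq : (0 : ℝ) ≤ lam ^ n := pow_nonneg hlam0 n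
    have hdiv : ∀ a : ℝ, a * lam ^ n / (1 - lam) = lam ^ n * (a * L) := by
      intro a; rw [hL, div_eq_mul_inv]; ring
    have hbd1 : lam * dist x x₀ ≤ dist y x₀ + 1 := by
      nlinarith [dist_nonneg (x := x) (y := x₀)]
    have hbd2 : lam * dist y x₀ ≤ dist y x₀ + 1 := by nlinarith
    have hsum : (lam * dist x x₀) * lam ^ n / (1 - lam) + lam ^ n * dist x x₀
        + (lam * dist y x₀) * lam ^ n / (1 - lam) ≤ lam ^ n * C := by
      rw [hdiv, hdiv, hCdef]
      have e1 : lam ^ n * (lam * dist x x₀ * L) ≤ lam ^ n * ((dist y x₀ + 1) * L) := by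
        apply mul_le_mul_of_nonneg_left _ hq
        exact mul_le_mul_of_nonneg_right hbd1 hLpos.le
      have e2 : lam ^ n * dist x x₀ ≤ lam ^ n * (dist y x₀ + 1) :=
        mul_le_mul_of_nonneg_left (by linarith) hq
      have e3 : lam ^ n * (lam * dist y x₀ * L) ≤ lam ^ n * ((dist y x₀ + 1) * L) := by
        apply mul_le_mul_of_nonneg_left _ hq
        exact mul_le_mul_of_nonneg_right hbd2 hLpos.le
      have e4 : lam ^ n * ((dist y x₀ + 1) * L) + lam ^ n * (dist y x₀ + 1)
          + lam ^ n * ((dist y x₀ + 1) * L)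
          = lam ^ n * ((dist y x₀ + 1) * (2 * L + 1)) := by ring
      have e5 : lam ^ n * ((dist y x₀ + 1) * (2 * L + 1))
          ≤ lam ^ n * ((dist y x₀ + 1) * (2 * L + 2)) := by
        apply mul_le_mul_of_nonneg_left _ hq
        nlinarith
      linarith
    linarith
  · -- Ψ (x, 0) = x
    intro x
    have hconst : approx (x, (0 : unitInterval)) = fun _ => x := by
      funext n
      simp [happrox, dyChain_zero]
    refine tendsto_nhds_unique (hΨ (x, 0)) ?_
    rw [hconst]
    exact tendsto_const_nhds
  · -- Ψ (x, 1) = x₀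
    intro x
    have hconst : approx (x, (1 : unitInterval)) = fun _ => x₀ := by
      funext n
      have h1 : ((1 : unitInterval) : ℝ) * 2 ^ n = ((2 ^ n : ℕ) : ℝ) := by push_cast; ring
      simp only [happrox, h1, Nat.floor_natCast]
      exact dyChain_high p x₀ x hpx n _ le_rfl
    refine tendsto_nhds_unique (hΨ (x, 1)) ?_
    rw [hconst]
    exact tendsto_const_nhds
  · -- equivariance
    intro g x t
    have heqc : ∀ n k, dyChain p x₀ (g • x) n k = g • dyChain p x₀ x n k := by
      intro n
      induction n with
      | zero =>
          intro k
          by_cases h : k = 0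
          · simp [dyChain, h]
          · simp [dyChain, h, hx₀ g]
      | succ n ih =>
          intro k
          by_cases h : k % 2 = 0
          · have e : ∀ z : X, dyChain p x₀ z (n + 1) k = dyChain p x₀ z n (k / 2) :=
              fun z => by simp [dyChain, h]
            rw [e, e, ih]
          · have e : ∀ z : X, dyChain p x₀ z (n + 1) k
                = p (dyChain p x₀ z n (k / 2), dyChain p x₀ z n (k / 2 + 1)) :=
              fun z => by simp [dyChain, h]
            rw [e, e, ih, ih, heq]
    have hfun : approx (g • x, t) = fun n => g • approx (x, t) n := by
      funext n
      simp only [happrox]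
      exact heqc n _
    refine tendsto_nhds_unique (hΨ (g • x, t)) ?_
    rw [hfun]
    exact (hΨ (x, t)).const_smul g
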